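/- For any fixed t1 and any activity a, the function t2 ↦ MI(t1,t2,a) has at most one point at which its left derivative strictly exceeds its right derivative. -/

import Mathlib

/-- Minimum intersection of an activity (sMin, sMax, p) with interval [t1,t2]. -/
noncomputable def MI (sMin sMax p t1 t2 : ℝ) : ℝ :=
  max 0 (min (min p (t2 - t1)) (min (sMin + p - t1) (t2 - sMax)))

/-- Left derivative. -/
noncomputable def leftD (f : ℝ → ℝ) (x : ℝ) : ℝ := derivWithin f (Set.Iio x) x

/-- Right derivative. -/
noncomputable def rightD (f : ℝ → ℝ) (x : ℝ) : ℝ := derivWithin f (Set.Ioi x) x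

open Set Filter

private lemma MI_eq (sMin sMax p t1 t : ℝ) :
    MI sMin sMax p t1 t
      = max 0 (min (min p (sMin + p - t1)) (t - max t1 sMax)) := by
  unfold MI
  have key : min (t - t1) (t - sMax) = t - max t1 sMax := by
    rcases le_total t1 sMax with h | h
    · rw [max_eq_right h, min_eq_right (by linarith)]
    · rw [max_eq_left h, min_eq_left (by linarith)]
  rw [min_min_min_comm, key]

private lemma leftD_const {f : ℝ → ℝ} {z k : ℝ}
    (h : f =ᶠ[nhdsWithin z (Iio z)] fun _ => k) (hz : f z = k) : leftD f z = 0 := by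
  unfold leftD
  rw [h.derivWithin_eq hz, derivWithin_fun_const (s := Iio z) (c := k)]; rfl

private lemma rightD_const {f : ℝ → ℝ} {z k : ℝ}
    (h : f =ᶠ[nhdsWithin z (Ioi z)] fun _ => k) (hz : f z = k) : rightD f z = 0 := by
  unfold rightD
  rw [h.derivWithin_eq hz, derivWithin_fun_const (s := Ioi z) (c := k)]; rfl

private lemma leftD_lin {f : ℝ → ℝ} {z M : ℝ}
    (h : f =ᶠ[nhdsWithin z (Iio z)] fun t => t - M) (hz : f z = z - M) : leftD f z = 1 := by
  unfold leftD
  rw [h.derivWithin_eq hz]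
  exact ((hasDerivWithinAt_id z (Iio z)).sub_const M).derivWithin (uniqueDiffWithinAt_Iio z)

private lemma rightD_lin {f : ℝ → ℝ} {z M : ℝ}
    (h : f =ᶠ[nhdsWithin z (Ioi z)] fun t => t - M) (hz : f z = z - M) : rightD f z = 1 := by
  unfold rightD
  rw [h.derivWithin_eq hz]
  exact ((hasDerivWithinAt_id z (Ioi z)).sub_const M).derivWithin (uniqueDiffWithinAt_Ioi z)

private lemma key (c M : ℝ) (hc : 0 < c) (z : ℝ)
    (h : leftD (fun t => max 0 (min c (t - M))) z
        > rightD (fun t => max 0 (min c (t - M))) z) : z = M + c := by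
  set F : ℝ → ℝ := fun t => max 0 (min c (t - M)) with hF
  by_contra hne
  rcases lt_trichotomy z M with hz | hz | hz
  · -- F = 0 near z
    have hev : ∀ᶠ t in nhds z, F t = 0 := by
      filter_upwards [Iio_mem_nhds hz] with t ht
      have : min c (t - M) ≤ t - M := min_le_right _ _
      simp only [hF]
      rw [max_eq_left (by simp at ht; linarith)]
    have hz0 : F z = 0 := hev.self_of_nhds
    have h1 : leftD F z = 0 := leftD_const (nhdsWithin_le_nhds hev) hz0
    have h2 : rightD F z = 0 := rightD_const (nhdsWithin_le_nhds hev) hz0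
    rw [h1, h2] at h; exact lt_irrefl _ h
  · -- z = M : leftD = 0, rightD = 1
    subst hz
    have hz0 : F z = 0 := by
      simp only [hF, sub_self]
      rw [min_eq_right hc.le, max_self]
    have h1 : leftD F z = 0 := by
      refine leftD_const ?_ hz0
      filter_upwards [self_mem_nhdsWithin] with t ht
      have ht' : t < z := ht
      have : min c (t - z) ≤ t - z := min_le_right _ _
      simp only [hF]
      rw [max_eq_left (by linarith)]
    have h2 : rightD F z = 1 := by
      refine rightD_lin ?_ (by rw [hz0, sub_self])
      filter_upwards [self_mem_nhdsWithin,
        nhdsWithin_le_nhds (Iio_mem_nhds (lt_add_of_pos_right z hc))] with t ht1 ht2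
      have ht1' : z < t := ht1
      have ht2' : t < z + c := ht2
      simp only [hF]
      rw [min_eq_right (by linarith), max_eq_right (by linarith)]
    rw [h1, h2] at h; linarith
  · rcases lt_trichotomy z (M + c) with hz2 | hz2 | hz2
    · -- F t = t - M near z
      have hev : ∀ᶠ t in nhds z, F t = t - M := by
        filter_upwards [Ioo_mem_nhds hz hz2] with t ht
        obtain ⟨ht1, ht2⟩ := ht
        simp only [hF]
        rw [min_eq_right (by linarith), max_eq_right (by linarith)]
      have hz0 : F z = z - M := hev.self_of_nhds
      have h1 : leftD F z = 1 := leftD_lin (nhdsWithin_le_nhds hev) hz0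
      have h2 : rightD F z = 1 := rightD_lin (nhdsWithin_le_nhds hev) hz0
      rw [h1, h2] at h; exact lt_irrefl _ h
    · exact hne hz2
    · -- F = c near z
      have hev : ∀ᶠ t in nhds z, F t = c := by
        filter_upwards [Ioi_mem_nhds hz2] with t ht
        have ht' : M + c < t := ht
        simp only [hF]
        rw [min_eq_left (by linarith), max_eq_right hc.le]
      have hz0 : F z = c := hev.self_of_nhds
      have h1 : leftD F z = 0 := leftD_const (nhdsWithin_le_nhds hev) hz0
      have h2 : rightD F z = 0 := rightD_const (nhdsWithin_le_nhds hev) hz0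
      rw [h1, h2] at h; exact lt_irrefl _ h

theorem mi_at_most_one_inflection (sMin sMax p t1 : ℝ)
    (hs : sMin ≤ sMax) (hp : 0 ≤ p) :
    ∀ x y : ℝ,
      leftD (fun t2 => MI sMin sMax p t1 t2) x >
        rightD (fun t2 => MI sMin sMax p t1 t2) x →
      leftD (fun t2 => MI sMin sMax p t1 t2) y >
        rightD (fun t2 => MI sMin sMax p t1 t2) y →
      x = y := by
  intro x y hx hy
  set c : ℝ := min p (sMin + p - t1) with hc
  set M : ℝ := max t1 sMax with hM
  have hfun : (fun t2 => MI sMin sMax p t1 t2)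
      = fun t => max 0 (min c (t - M)) := funext fun t => MI_eq sMin sMax p t1 t
  rw [hfun] at hx hy
  rcases le_or_gt c 0 with hc0 | hc0
  · -- function is constant 0
    exfalso
    have hev : ∀ t : ℝ, max 0 (min c (t - M)) = 0 := fun t =>
      max_eq_left (le_trans (min_le_left _ _) hc0)
    have hev' : ∀ᶠ t in nhds x, (fun t => max 0 (min c (t - M))) t = 0 :=
      Eventually.of_forall hev
    have h1 : leftD (fun t => max 0 (min c (t - M))) x = 0 :=
      leftD_const (nhdsWithin_le_nhds hev') (hev x)
    have h2 : rightD (fun t => max 0 (min c (t - M))) x = 0 :=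
      rightD_const (nhdsWithin_le_nhds hev') (hev x)
    rw [h1, h2] at hx; exact lt_irrefl _ hx
  · rw [key c M hc0 x hx, key c M hc0 y hy]
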